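/- Every n-truncated globular set is (n+1)-coskeletal. -/

import Mathlib

open CategoryTheory CategoryTheory.Limits Opposite

/-- Morphisms of the globe category. -/
inductive GlobeHom : ℕ → ℕ → Type where
  | ident (m : ℕ) : GlobeHom m m
  | sig {m n : ℕ} (h : m < n) : GlobeHom m n
  | tau {m n : ℕ} (h : m < n) : GlobeHom m n

/-- Composition in the globe category: determined by the inner factor. -/
def GlobeHom.comp : {a b c : ℕ} → GlobeHom a b → GlobeHom b c → GlobeHom a c
  | _, _, _, .ident _, g => g
  | _, _, _, .sig h, .ident _ => .sig h
  | _, _, _, .sig h, .sig h' => .sig (h.trans h')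
  | _, _, _, .sig h, .tau h' => .sig (h.trans h')
  | _, _, _, .tau h, .ident _ => .tau h
  | _, _, _, .tau h, .sig h' => .tau (h.trans h')
  | _, _, _, .tau h, .tau h' => .tau (h.trans h')

lemma GlobeHom.comp_assoc : ∀ {a b c d : ℕ} (f : GlobeHom a b) (g : GlobeHom b c)
    (h : GlobeHom c d), (f.comp g).comp h = f.comp (g.comp h) := by
  intro a b c d f g h
  cases f <;> cases g <;> cases h <;> rfl

lemma GlobeHom.le : ∀ {a b : ℕ}, GlobeHom a b → a ≤ b
  | _, _, .ident _ => le_rfl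
  | _, _, .sig h => h.le
  | _, _, .tau h => h.le

/-- The globe category `G`: objects are natural numbers. -/
def Globe : Type := ℕ

instance : Category Globe where
  Hom m n := GlobeHom m n
  id m := GlobeHom.ident m
  comp f g := f.comp g
  id_comp _ := rfl
  comp_id := by rintro _ _ (_|_|_) <;> rfl
  assoc f g h := GlobeHom.comp_assoc f g h

/-- The object of `Globe` corresponding to `k : ℕ`. -/
def gl (k : ℕ) : Globe := k

/-- The underlying natural number of an object of `Globe`. -/
def gval (m : Globe) : ℕ := m

/-- Globular sets: presheaves on the globe category. -/
abbrev GlobSet := Globeᵒᵖ ⥤ Type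

/-- The source map `X_{k+1} → X_k` of a globular set. -/
def gsrc (X : GlobSet) (k : ℕ) : X.obj (op (gl (k+1))) → X.obj (op (gl k)) :=
  X.map (Quiver.Hom.op (show gl k ⟶ gl (k+1) from GlobeHom.sig (Nat.lt_succ_self k)))

/-- The target map `X_{k+1} → X_k` of a globular set. -/
def gtgt (X : GlobSet) (k : ℕ) : X.obj (op (gl (k+1))) → X.obj (op (gl k)) :=
  X.map (Quiver.Hom.op (show gl k ⟶ gl (k+1) from GlobeHom.tau (Nat.lt_succ_self k)))

/-- Two `k`-cells are parallel if `k = 0` or they have the same source and target. -/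
def Parallel (X : GlobSet) : (k : ℕ) → X.obj (op (gl k)) → X.obj (op (gl k)) → Prop
  | 0, _, _ => True
  | (k+1), x, y => gsrc X k x = gsrc X k y ∧ gtgt X k x = gtgt X k y

/-- The full subcategory `G_n` of the globe category on objects `≤ n`. -/
def GlobeLE (n : ℕ) := ObjectProperty.FullSubcategory (fun m : Globe => gval m ≤ n)

instance (n : ℕ) : Category (GlobeLE n) := ObjectProperty.FullSubcategory.category _

/-- The inclusion `ι_n : G_n ⥤ G`. -/
def iotaGlobe (n : ℕ) : GlobeLE n ⥤ Globe := ObjectProperty.ι _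

/-- A morphism of globes coming from an equality of dimensions. -/
def GlobeHom.ofEq : {a b : ℕ} → a = b → GlobeHom a b
  | _, _, rfl => .ident _

/-- A tag distinguishing the three kinds of globe morphisms. -/
def GlobeHom.tag : {a b : ℕ} → GlobeHom a b → ℕ
  | _, _, .ident _ => 0
  | _, _, .sig _ => 1
  | _, _, .tau _ => 2

lemma GlobeHom.ext_tag : ∀ {a b : ℕ} (f g : GlobeHom a b), f.tag = g.tag → f = g := by
  intro a b f g h
  cases f <;> cases g <;> simp_all [GlobeHom.tag]

lemma GlobeHom.tag_comp : ∀ {a b c : ℕ} (f : GlobeHom a b) (g : GlobeHom b c),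
    (f.comp g).tag = if f.tag = 0 then g.tag else f.tag := by
  intro a b c f g
  cases f <;> cases g <;> simp [GlobeHom.comp, GlobeHom.tag]

lemma GlobeHom.tag_ofEq {a b : ℕ} (h : a = b) : (GlobeHom.ofEq h).tag = 0 := by
  cases h; rfl

/-- The truncation of a globe morphism. -/
def GlobeHom.trunc (n : ℕ) : {a b : ℕ} → GlobeHom a b → GlobeHom (min a n) (min b n)
  | _, _, .ident m => .ident _
  | a, b, .sig h => if h' : min a n < min b n then .sig h' else .ofEq (by omega)
  | a, b, .tau h => if h' : min a n < min b n then .tau h' else .ofEq (by omega)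

lemma GlobeHom.tag_trunc (n : ℕ) : ∀ {a b : ℕ} (f : GlobeHom a b),
    (f.trunc n).tag = if min a n < min b n then f.tag else 0 := by
  intro a b f
  cases f with
  | ident => simp [GlobeHom.trunc, GlobeHom.tag]
  | sig h =>
      rw [GlobeHom.trunc]
      split
      · simp_all [GlobeHom.tag]
      · rw [GlobeHom.tag_ofEq]
  | tau h =>
      rw [GlobeHom.trunc]
      split
      · simp_all [GlobeHom.tag]
      · rw [GlobeHom.tag_ofEq]

/-- The truncation functor `t_n : G ⥤ G_n`. -/
def truncFunctor (n : ℕ) : Globe ⥤ GlobeLE n where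
  obj k := ⟨gl (min (gval k) n), min_le_right _ _⟩
  map {a b} f := InducedCategory.homMk (GlobeHom.trunc n f)
  map_id _ := rfl
  map_comp {a b c} f g := by
    apply ObjectProperty.hom_ext
    apply GlobeHom.ext_tag
    have hab := GlobeHom.le f
    have hbc := GlobeHom.le g
    show ((f.comp g).trunc n).tag = ((f.trunc n).comp (g.trunc n)).tag
    erw [GlobeHom.tag_trunc, GlobeHom.tag_comp, GlobeHom.tag_comp, GlobeHom.tag_trunc,
      GlobeHom.tag_trunc]
    revert a b c
    intro (a : ℕ) (b : ℕ) (c : ℕ) (f : GlobeHom a b) (g : GlobeHom b c) hab hbc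
    cases f <;> cases g <;> simp [GlobeHom.tag] <;> split_ifs <;> omega

/-- The precomposition functor `t_n^*`. -/
def tStar (n : ℕ) : ((GlobeLE n)ᵒᵖ ⥤ Type) ⥤ GlobSet :=
  (Functor.whiskeringLeft _ _ _).obj (truncFunctor n).op

/-- The left Kan extension functor `t_{n!}`, left adjoint of `t_n^*`. -/
noncomputable def tLan (n : ℕ) : GlobSet ⥤ ((GlobeLE n)ᵒᵖ ⥤ Type) :=
  (truncFunctor n).op.lan

/-- The adjunction `t_{n!} ⊣ t_n^*`. -/
noncomputable def tAdj (n : ℕ) : tLan n ⊣ tStar n :=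
  Functor.lanAdjunction _ _

/-- A globular set is `n`-truncated if the unit of `t_{n!} ⊣ t_n^*` is an isomorphism at it. -/
def IsTruncated (n : ℕ) (X : GlobSet) : Prop := IsIso ((tAdj n).unit.app X)

/-- The restriction functor `ι_n^*`. -/
def iotaStar (n : ℕ) : GlobSet ⥤ ((GlobeLE n)ᵒᵖ ⥤ Type) :=
  (Functor.whiskeringLeft _ _ _).obj (iotaGlobe n).op

/-- The right Kan extension functor `ι_{n*}`, right adjoint of `ι_n^*`. -/
noncomputable def iotaRan (n : ℕ) : ((GlobeLE n)ᵒᵖ ⥤ Type) ⥤ GlobSet :=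
  (iotaGlobe n).op.ran

/-- The adjunction `ι_n^* ⊣ ι_{n*}`. -/
noncomputable def iotaAdj (n : ℕ) : iotaStar n ⊣ iotaRan n :=
  Functor.ranAdjunction _ _

/-- A globular set is `n`-coskeletal if the unit of `ι_n^* ⊣ ι_{n*}` is an isomorphism at it. -/
def IsCoskeletal (n : ℕ) (X : GlobSet) : Prop := IsIso ((iotaAdj n).unit.app X)

/-- The representable globular set `D_k`. -/
def disk (k : ℕ) : GlobSet := yoneda.obj (gl k)

/-- The boundary `∂D_k` of the `k`-disk. -/
def boundary (k : ℕ) : GlobSet where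
  obj m := { f : GlobeHom (gval m.unop) k // gval m.unop < k }
  map {m m'} g := TypeCat.ofHom fun f => ⟨GlobeHom.comp g.unop f.1, lt_of_le_of_lt (GlobeHom.le g.unop) f.2⟩
  map_id m := by ext f; rfl
  map_comp {m m' m''} g h := by
    ext f; first | exact Subtype.ext (GlobeHom.comp_assoc h.unop g.unop f.1) | exact GlobeHom.comp_assoc h.unop g.unop f.1

/-- The boundary inclusion `∂D_k ⟶ D_k`. -/
def boundaryIncl (k : ℕ) : boundary k ⟶ disk k where
  app m := TypeCat.ofHom fun f => f.1
  naturality m m' g := by ext f; rfl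

section Aux

open CategoryTheory

lemma GlobeHom.eq_ident {a : ℕ} (u : GlobeHom a a) : u = .ident a := by
  cases u with
  | ident => rfl
  | sig h => exact absurd h (lt_irrefl a)
  | tau h => exact absurd h (lt_irrefl a)

lemma GlobeLE.ext' {n : ℕ} {A B : GlobeLE n} (h : A.obj = B.obj) : A = B := by
  cases A; cases B; cases h; rfl

/-- Any endomorphism in `(GlobeLE n)ᵒᵖ` is the identity. -/
lemma opLE_endo_id {n : ℕ} {A : (GlobeLE n)ᵒᵖ} (u : A ⟶ A) : u = 𝟙 A :=
  Quiver.Hom.unop_inj (InducedCategory.hom_ext (GlobeHom.eq_ident u.unop.hom))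

lemma globe_hom_eq_eqToHom {A B : Globe} (h : A = B) (u : A ⟶ B) : u = eqToHom h := by
  subst h; rw [eqToHom_refl]; exact GlobeHom.eq_ident u

lemma tagLE_comp {n : ℕ} {A B C : GlobeLE n} (f : A ⟶ B) (g : B ⟶ C) :
    GlobeHom.tag (f ≫ g).hom = if GlobeHom.tag f.hom = 0 then GlobeHom.tag g.hom else GlobeHom.tag f.hom :=
  GlobeHom.tag_comp f.hom g.hom

lemma tagLE_trunc (n : ℕ) {a b : Globe} (f : a ⟶ b) :
    GlobeHom.tag ((truncFunctor n).map f).hom =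
      if min (gval a) n < min (gval b) n then GlobeHom.tag f else 0 :=
  GlobeHom.tag_trunc n f

lemma tag_eqToHomLE {n : ℕ} {A B : GlobeLE n} (h : A = B) :
    GlobeHom.tag (eqToHom h).hom = 0 := by
  subst h; rw [eqToHom_refl]; rfl

/-- Equality of truncation objects from equality of minima. -/
lemma gTrObjEq (n : ℕ) (a b : ℕ) (h : min a n = min b n) :
    (truncFunctor n).obj (gl a) = (truncFunctor n).obj (gl b) :=
  GlobeLE.ext' (congrArg gl h)

/-- The canonical map from `min k (n+1)` to `k` in the globe category. -/
def gRho (n k : ℕ) : gl (min k (n+1)) ⟶ gl k :=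
  if h : min k (n+1) < k then GlobeHom.sig h else GlobeHom.ofEq (show min k (n+1) = k by omega)

lemma gTagRho (n k : ℕ) :
    GlobeHom.tag (gRho n k) = if min k (n+1) < k then 1 else 0 := by
  unfold gRho
  split
  · rfl
  · exact GlobeHom.tag_ofEq _

/-- The object of `GlobeLE (n+1)` of dimension `min k (n+1)`. -/
def gTN (n k : ℕ) : GlobeLE (n+1) := ⟨gl (min k (n+1)), min_le_right _ _⟩

variable (n : ℕ) (Z : (GlobeLE n)ᵒᵖ ⥤ Type) (Y : GlobSet)
variable (g : (iotaStar (n+1)).obj Y ⟶ (iotaStar (n+1)).obj ((tStar n).obj Z))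

/-- The component of the extension of `g` in dimension `k`. -/
def gExtApp (k : ℕ) : Y.obj (op (gl k)) ⟶ ((tStar n).obj Z).obj (op (gl k)) :=
  TypeCat.ofHom fun y => Z.map (eqToHom (congrArg op (gTrObjEq n (min k (n+1)) k (by omega))))
    (g.app (op (gTN n k)) (Y.map (gRho n k).op y))

lemma gleHomEqToHom {n : ℕ} {A B : GlobeLE n} (h : A = B) (u : A ⟶ B) : u = eqToHom h := by
  subst h; rw [eqToHom_refl]; exact InducedCategory.hom_ext (GlobeHom.eq_ident u.hom)

lemma zMapEqToHomInj {n : ℕ} (Z : (GlobeLE n)ᵒᵖ ⥤ Type) {A B : (GlobeLE n)ᵒᵖ} (e : A = B)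
    {x1 x2 : Z.obj A} (hx : Z.map (eqToHom e) x1 = Z.map (eqToHom e) x2) : x1 = x2 := by
  subst e; simpa using hx

/-- The `σ` maps of the globe category, as morphisms of `Globe`. -/
def gSig {a b : ℕ} (h : a < b) : gl a ⟶ gl b := GlobeHom.sig h

/-- The `τ` maps of the globe category, as morphisms of `Globe`. -/
def gTau {a b : ℕ} (h : a < b) : gl a ⟶ gl b := GlobeHom.tau h

lemma tagG_comp {a b c : Globe} (f : a ⟶ b) (g : b ⟶ c) :
    GlobeHom.tag (f ≫ g) = if GlobeHom.tag f = 0 then GlobeHom.tag g else GlobeHom.tag f :=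
  GlobeHom.tag_comp f g

lemma gKey1 (n a b : ℕ) (φ : GlobeHom b a)
    (hgood : ¬(GlobeHom.tag φ = 2 ∧ b = n+1 ∧ n+1 < a)) :
    GlobeHom.comp (gRho n b) φ = GlobeHom.comp (GlobeHom.trunc (n+1) φ) (gRho n a) := by
  apply GlobeHom.ext_tag
  have hle := GlobeHom.le φ
  erw [GlobeHom.tag_comp, GlobeHom.tag_comp, GlobeHom.tag_trunc, gTagRho, gTagRho]
  cases φ <;> simp [GlobeHom.tag] at hgood ⊢ <;> split_ifs <;> intros
  all_goals omega

variable (n : ℕ) (Z : (GlobeLE n)ᵒᵖ ⥤ Type) (Y : GlobSet)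
variable (g : (iotaStar (n+1)).obj Y ⟶ (iotaStar (n+1)).obj ((tStar n).obj Z))

/-- `g` cannot tell apart the source and target maps from a level above `n+1`. -/
lemma gSigTau {a : ℕ} (ha : min (n+1) (n+1) < a) (y : Y.obj (op (gl a))) :
    g.app (op (gTN n (n+1))) (Y.map (gTau ha).op y)
      = g.app (op (gTN n (n+1))) (Y.map (gSig ha).op y) := by
  have hlt : min n (n+1) < min (n+1) (n+1) := by omega
  have hlt' : min n (n+1) < a := by omega
  have hcompτ : gSig hlt ≫ gTau ha = gSig hlt' := rfl
  have hcompσ : gSig hlt ≫ gSig ha = gSig hlt' := rfl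
  have key : Y.map (gSig hlt).op (Y.map (gTau ha).op y)
      = Y.map (gSig hlt).op (Y.map (gSig ha).op y) := by
    rw [← FunctorToTypes.map_comp_apply, ← FunctorToTypes.map_comp_apply,
      ← op_comp, ← op_comp, hcompτ, hcompσ]
  have hAB : (truncFunctor n).obj (gl (min (n+1) (n+1)))
      = (truncFunctor n).obj (gl (min n (n+1))) := gTrObjEq n _ _ (by omega)
  apply zMapEqToHomInj Z (congrArg op hAB)
  have hv : (truncFunctor n).map (gSig hlt) = eqToHom hAB.symm := gleHomEqToHom _ _
  have hz : ∀ u : Y.obj (op (gl (min (n+1) (n+1)))),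
      Z.map (eqToHom (congrArg op hAB)) (g.app (op (gTN n (n+1))) u)
        = g.app (op (gTN n n)) (Y.map (gSig hlt).op u) := by
    intro u
    have nat := NatTrans.naturality_apply g
      (Quiver.Hom.op (X := gTN n n) (Y := gTN n (n+1)) (InducedCategory.homMk (gSig hlt))) u
    refine Eq.trans ?_ nat.symm
    refine congrFun ?_ (g.app (op (gTN n (n+1))) u)
    show (Z.map (eqToHom (congrArg op hAB)) : _ → _)
      = Z.map ((truncFunctor n).map (gSig hlt)).op
    rw [hv, eqToHom_op]
  rw [hz, hz]
  exact congrArg _ key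

lemma gExtNat {a b : ℕ} (φ : gl b ⟶ gl a)
    (hkey : gRho n b ≫ φ
      = (GlobeHom.trunc (n+1) φ : gl (min b (n+1)) ⟶ gl (min a (n+1))) ≫ gRho n a)
    (y : Y.obj (op (gl a))) :
    gExtApp n Z Y g b (Y.map φ.op y)
      = ((tStar n).obj Z).map φ.op (gExtApp n Z Y g a y) := by
  have key2 : ((truncFunctor n).map
        (GlobeHom.trunc (n+1) φ : gl (min b (n+1)) ⟶ gl (min a (n+1)))).op
        ≫ eqToHom (congrArg op (gTrObjEq n (min b (n+1)) b (by omega)))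
      = eqToHom (congrArg op (gTrObjEq n (min a (n+1)) a (by omega)))
        ≫ ((truncFunctor n).map φ).op := by
    apply Quiver.Hom.unop_inj
    simp only [unop_comp, Quiver.Hom.unop_op, eqToHom_unop]
    apply InducedCategory.hom_ext
    apply GlobeHom.ext_tag
    erw [tagLE_comp, tagLE_comp, Quiver.Hom.unop_op, eqToHom_unop, tag_eqToHomLE, tag_eqToHomLE,
      tagLE_trunc, tagLE_trunc]
    erw [tagLE_trunc]
    dsimp only [gval, gl]
    grind
  show Z.map (eqToHom (congrArg op (gTrObjEq n (min b (n+1)) b (by omega))))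
      (g.app (op (gTN n b)) (Y.map (gRho n b).op (Y.map φ.op y)))
    = Z.map ((truncFunctor n).map φ).op
      (Z.map (eqToHom (congrArg op (gTrObjEq n (min a (n+1)) a (by omega))))
        (g.app (op (gTN n a)) (Y.map (gRho n a).op y)))
  erw [← FunctorToTypes.map_comp_apply, ← op_comp, hkey, op_comp, FunctorToTypes.map_comp_apply]
  refine (congrArg (Z.map (eqToHom (congrArg op (gTrObjEq n (min b (n+1)) b (by omega)))))
      (NatTrans.naturality_apply g
        (Quiver.Hom.op (X := gTN n b) (Y := gTN n a) (InducedCategory.homMk (GlobeHom.trunc (n+1) φ)))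
        (Y.map (gRho n a).op y))).trans ?_
  exact (FunctorToTypes.map_comp_apply Z _ _ _).symm.trans
    ((ConcreteCategory.congr_hom (congrArg Z.map key2) _).trans (FunctorToTypes.map_comp_apply Z _ _ _))

lemma gExtNatFull {a b : ℕ} (φ : gl b ⟶ gl a) (y : Y.obj (op (gl a))) :
    gExtApp n Z Y g b (Y.map φ.op y)
      = ((tStar n).obj Z).map φ.op (gExtApp n Z Y g a y) := by
  by_cases hbad : GlobeHom.tag φ = 2 ∧ b = n+1 ∧ n+1 < a
  · obtain ⟨htag, hb, hlt⟩ := hbad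
    subst hb
    have ha : min (n+1) (n+1) < a := by omega
    change GlobeHom (n+1) a at φ
    cases φ with
    | ident => simp [GlobeHom.tag] at htag
    | sig h => simp [GlobeHom.tag] at htag
    | tau h =>
      have hσkey : gRho n (n+1) ≫ gSig h
          = (GlobeHom.trunc (n+1) (gSig h)
              : gl (min (n+1) (n+1)) ⟶ gl (min a (n+1))) ≫ gRho n a :=
        gKey1 n a (n+1) (GlobeHom.sig h) (by simp [GlobeHom.tag])
      have hgen := gExtNat n Z Y g (gSig h) hσkey y
      have hcompτ : gRho n (n+1) ≫ gTau h = gTau ha := by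
        apply GlobeHom.ext_tag
        rw [tagG_comp, gTagRho]
        simp [gTau, GlobeHom.tag]
      have hcompσ : gRho n (n+1) ≫ gSig h = gSig ha := by
        apply GlobeHom.ext_tag
        rw [tagG_comp, gTagRho]
        simp [gSig, GlobeHom.tag]
      have hLHS : gExtApp n Z Y g (n+1) (Y.map (gTau h).op y)
          = gExtApp n Z Y g (n+1) (Y.map (gSig h).op y) := by
        unfold gExtApp
        show Z.map _ (g.app (op (gTN n (n+1))) (Y.map (gRho n (n+1)).op (Y.map (gTau h).op y)))
          = Z.map _ (g.app (op (gTN n (n+1))) (Y.map (gRho n (n+1)).op (Y.map (gSig h).op y)))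
        refine congrArg _ ?_
        rw [← FunctorToTypes.map_comp_apply, ← FunctorToTypes.map_comp_apply,
          ← op_comp, ← op_comp, hcompτ, hcompσ]
        exact gSigTau n Z Y g ha y
      have hWeq : (truncFunctor n).map (gTau h) = (truncFunctor n).map (gSig h) := by
        have hW : (truncFunctor n).obj (gl (n+1)) = (truncFunctor n).obj (gl a) :=
          gTrObjEq n (n+1) a (by omega)
        exact (gleHomEqToHom hW _).trans (gleHomEqToHom hW _).symm
      refine hLHS.trans (hgen.trans ?_)
      show Z.map ((truncFunctor n).map (gSig h)).op _
        = Z.map ((truncFunctor n).map (gTau h)).op _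
      rw [hWeq]
  · exact gExtNat n Z Y g φ (gKey1 n a b φ hbad) y

/-- The extension of `g` to a map of globular sets. -/
def gExtend : Y ⟶ (tStar n).obj Z where
  app m := gExtApp n Z Y g (gval m.unop)
  naturality m m' u := by
    ext y
    exact gExtNatFull n Z Y g u.unop y

lemma gECancel (a : ℕ) (x : Z.obj (op ((truncFunctor n).obj (gl a)))) :
    Z.map (eqToHom (congrArg op (gTrObjEq n (min a (n+1)) a (by omega))))
      (Z.map ((truncFunctor n).map (gRho n a)).op x) = x := by
  rw [← FunctorToTypes.map_comp_apply]
  rw [show (((truncFunctor n).map (gRho n a)).op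
      ≫ eqToHom (congrArg op (gTrObjEq n (min a (n+1)) a (by omega)))) = 𝟙 _ from
    opLE_endo_id _]
  rw [FunctorToTypes.map_id_apply]

lemma gRestrExtend : (iotaStar (n+1)).map (gExtend n Z Y g) = g := by
  apply NatTrans.ext
  funext M; ext y
  obtain ⟨M⟩ := M
  have hnat := NatTrans.naturality_apply g
    (Quiver.Hom.op (show gTN n (gval M.obj) ⟶ M from InducedCategory.homMk (gRho n (gval M.obj)))) y
  show gExtApp n Z Y g (gval M.obj) y = g.app (op M) y
  unfold gExtApp
  erw [TypeCat.ofHom_apply]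
  rw [show Y.map (gRho n (gval M.obj)).op y
      = ((iotaStar (n+1)).obj Y).map
          (Quiver.Hom.op (show gTN n (gval M.obj) ⟶ M from InducedCategory.homMk (gRho n (gval M.obj)))) y from rfl]
  rw [hnat]
  exact gECancel n Z (gval M.obj) (g.app (op M) y)

lemma gExtendRestr (f : Y ⟶ (tStar n).obj Z) :
    gExtend n Z Y ((iotaStar (n+1)).map f) = f := by
  apply NatTrans.ext
  funext m; ext y
  obtain ⟨m⟩ := m
  show gExtApp n Z Y ((iotaStar (n+1)).map f) (gval m) y = f.app (op m) y
  unfold gExtApp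
  erw [TypeCat.ofHom_apply]
  rw [show ((iotaStar (n+1)).map f).app (op (gTN n (gval m))) (Y.map (gRho n (gval m)).op y)
      = f.app (op (gl (min (gval m) (n+1)))) (Y.map (gRho n (gval m)).op y) from rfl]
  rw [NatTrans.naturality_apply f (gRho n (gval m)).op y]
  exact gECancel n Z (gval m) (f.app (op m) y)

lemma gBijW : Function.Bijective
    (fun f : Y ⟶ (tStar n).obj Z => (iotaStar (n+1)).map f) :=
  Function.bijective_iff_has_inverse.mpr
    ⟨gExtend n Z Y, fun f => gExtendRestr n Z Y f, fun g => gRestrExtend n Z Y g⟩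

lemma gUnitIsoOfBij {C D : Type*} [Category C] [Category D] {L : C ⥤ D} {R : D ⥤ C}
    (adj : L ⊣ R) (X : C) (hb : ∀ Y : C, Function.Bijective (fun f : Y ⟶ X => L.map f)) :
    IsIso (adj.unit.app X) := by
  apply isIso_of_yoneda_map_bijective
  intro T
  dsimp only [Functor.id_obj, Functor.comp_obj]
  convert (adj.homEquiv T (L.obj X)).bijective.comp (hb T) using 1
  funext x
  rw [Function.comp_apply, Adjunction.homEquiv_unit]
  exact adj.unit.naturality x

lemma gBijTransfer {C D : Type*} [Category C] [Category D] (L : C ⥤ D) {X X' : C}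
    (e : X ≅ X') (Y : C) (h : Function.Bijective (fun f : Y ⟶ X' => L.map f)) :
    Function.Bijective (fun f : Y ⟶ X => L.map f) := by
  have heq : (fun f : Y ⟶ X => L.map f)
      = (fun h => h ≫ L.map e.inv) ∘ (fun f' : Y ⟶ X' => L.map f') ∘ (fun f => f ≫ e.hom) := by
    funext f
    simp only [Function.comp_apply, ← Functor.map_comp, Category.assoc, Iso.hom_inv_id,
      Category.comp_id]
  rw [heq]
  exact (((isIso_iff_yoneda_map_bijective (L.map e.inv)).mp inferInstance _).comp h).comp
    ((isIso_iff_yoneda_map_bijective e.hom).mp inferInstance Y)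

end Aux

/-- Every `n`-truncated globular set is `(n+1)`-coskeletal. -/
theorem statement7 (n : ℕ) (X : GlobSet) (h : IsTruncated n X) :
    IsCoskeletal (n + 1) X := by
  haveI : IsIso ((tAdj n).unit.app X) := h
  unfold IsCoskeletal
  apply gUnitIsoOfBij
  intro Y
  exact gBijTransfer (iotaStar (n+1)) (asIso ((tAdj n).unit.app X)) Y
    (gBijW n ((tLan n).obj X) Y)
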